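/- Let f : [v_a, v_b] → ℝ≥0 be integrable, monotonically increasing on [v_a, v_max] and monotonically decreasing on [v_max, v_b] for some v_max ∈ [v_a, v_b]. For q ∈ ℕ, set v_j = v_a + j(v_b − v_a)/q. Then Σ_{j=1}^q f(v_j) ≤ (q/(v_b − v_a)) ∫_{v_a}^{v_b} f(v) dv + f(v_max). -/

import Mathlib

open MeasureTheory

/-- Let `f : [v_a, v_b] → ℝ≥0` be integrable, monotonically increasing on
`[v_a, v_max]` and monotonically decreasing on `[v_max, v_b]`. For a positive
integer `q` and `v_j = v_a + j(v_b − v_a)/q`, one has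
`∑_{j=1}^q f(v_j) ≤ (q/(v_b − v_a)) ∫_{v_a}^{v_b} f + f(v_max)`. -/
theorem sum_le_integral_unimodal (va vb vmax : ℝ) (f : ℝ → ℝ) (q : ℕ)
    (hq : 0 < q) (hab : va < vb) (hmax : vmax ∈ Set.Icc va vb)
    (hf0 : ∀ v ∈ Set.Icc va vb, 0 ≤ f v)
    (hint : IntervalIntegrable f volume va vb)
    (hmono : MonotoneOn f (Set.Icc va vmax))
    (hanti : AntitoneOn f (Set.Icc vmax vb)) :
    ∑ j ∈ Finset.Icc 1 q, f (va + (j : ℝ) * (vb - va) / q) ≤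
      (q : ℝ) / (vb - va) * ∫ v in va..vb, f v + f vmax := by
  classical
  have hq' : (0:ℝ) < q := by exact_mod_cast hq
  set h := (vb - va) / q with hh_def
  have hh : 0 < h := div_pos (by linarith) hq'
  set v : ℕ → ℝ := fun i => va + i * h with hv_def
  have hvq : v q = vb := by
    simp only [hv_def, hh_def]; field_simp; ring
  have hvmono : ∀ {i j : ℕ}, i ≤ j → v i ≤ v j := by
    intro i j hij
    have hij' : (i:ℝ) ≤ j := by exact_mod_cast hij
    simp only [hv_def]
    nlinarith
  have hvsucc : ∀ i : ℕ, v (i+1) - v i = h := by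
    intro i; simp only [hv_def]; push_cast; ring
  have hva : ∀ i : ℕ, va ≤ v i := by
    intro i
    simp only [hv_def]
    have : (0:ℝ) ≤ i := Nat.cast_nonneg i
    nlinarith
  have hvb : ∀ i : ℕ, i ≤ q → v i ≤ vb := by
    intro i hi; rw [← hvq]; exact hvmono hi
  -- find the index k with v k ≤ vmax ≤ v (k+1)
  have hPex : ∃ j, vmax ≤ v (j+1) := ⟨q - 1, by
    rw [Nat.sub_add_cancel hq, hvq]; exact hmax.2⟩
  obtain ⟨k, hkq, hk1, hk2⟩ : ∃ k, k < q ∧ v k ≤ vmax ∧ vmax ≤ v (k+1) := by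
    refine ⟨Nat.find hPex, ?_, ?_, Nat.find_spec hPex⟩
    · have h1 : Nat.find hPex ≤ q - 1 := Nat.find_le (by
        rw [Nat.sub_add_cancel hq, hvq]; exact hmax.2)
      omega
    · rcases Nat.eq_zero_or_pos (Nat.find hPex) with h0 | hpos
      · rw [h0]
        simpa [hv_def] using hmax.1
      · have hmin := Nat.find_min hPex (m := Nat.find hPex - 1) (Nat.sub_lt hpos one_pos)
        have e : Nat.find hPex - 1 + 1 = Nat.find hPex := by omega
        rw [e] at hmin
        exact le_of_lt (not_le.mp hmin)
  -- modified partition u inserting vmax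
  set u : ℕ → ℝ := fun i => if i ≤ k then v i else if i = k + 1 then vmax else v (i - 1)
    with hu_def
  have hu1 : ∀ i, i ≤ k → u i = v i := by
    intro i hi; simp only [hu_def]; rw [if_pos hi]
  have huk1 : u (k+1) = vmax := by
    simp only [hu_def]; rw [if_neg (by omega)]; simp
  have hu2 : ∀ i, k + 2 ≤ i → u i = v (i-1) := by
    intro i hi; simp only [hu_def]; rw [if_neg (by omega), if_neg (by omega)]
  have huva : ∀ i, va ≤ u i := by
    intro i; simp only [hu_def]; split_ifs
    · exact hva _
    · exact hmax.1
    · exact hva _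
  have huvb : ∀ i, i ≤ q + 1 → u i ≤ vb := by
    intro i hi; simp only [hu_def]; split_ifs with h1 h2
    · exact hvb _ (by omega)
    · exact hmax.2
    · exact hvb _ (by omega)
  have huq1 : u (q+1) = vb := by
    rw [hu2 (q+1) (by omega)]
    simpa using hvq
  have hIcc : Set.uIcc va vb = Set.Icc va vb := Set.uIcc_of_le hab.le
  have hsubint : ∀ a b : ℝ, va ≤ a → a ≤ vb → va ≤ b → b ≤ vb →
      IntervalIntegrable f volume a b := by
    intro a b h1 h2 h3 h4
    exact hint.mono_set (Set.uIcc_subset_uIcc (by rw [hIcc]; exact ⟨h1, h2⟩)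
      (by rw [hIcc]; exact ⟨h3, h4⟩))
  have hintu : ∀ i, i < q → IntervalIntegrable f volume (u (i+1)) (u (i+2)) :=
    fun i hi => hsubint _ _ (huva _) (huvb _ (by omega)) (huva _) (huvb _ (by omega))
  have hconst : ∀ (a b C : ℝ), a ≤ b → IntervalIntegrable f volume a b →
      (∀ x ∈ Set.Icc a b, C ≤ f x) → C * (b - a) ≤ ∫ x in a..b, f x := by
    intro a b C hab' hi hC
    have := intervalIntegral.integral_mono_on hab' intervalIntegrable_const hi hC
    rwa [intervalIntegral.integral_const, smul_eq_mul, mul_comm] at this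
  set c : ℕ → ℝ := fun i => (if i + 1 = k then (v (k+1) - vmax) * f vmax else 0) +
      (if i = k then (vmax - v k) * f vmax else 0) with hc_def
  have key : ∀ i ∈ Finset.range q,
      f (v (i+1)) * h ≤ (∫ x in u (i+1)..u (i+2), f x) + c i := by
    intro i hi
    rw [Finset.mem_range] at hi
    rcases lt_trichotomy (i+1) k with hik | hik | hik
    · -- interval entirely left of vmax
      have e1 : u (i+1) = v (i+1) := hu1 _ (by omega)
      have e2 : u (i+2) = v (i+2) := hu1 _ (by omega)
      have hle : v (i+2) ≤ vmax := le_trans (hvmono (by omega)) hk1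
      have hint' := hintu i hi
      rw [e1, e2] at hint' ⊢
      have hb := hconst (v (i+1)) (v (i+2)) (f (v (i+1))) (hvmono (by omega)) hint'
        (fun x hx => hmono ⟨hva _, le_trans (hvmono (by omega : i+1 ≤ i+2)) hle⟩
          ⟨le_trans (hva _) hx.1, le_trans hx.2 hle⟩ hx.1)
      have hc0 : c i = 0 := by
        simp only [hc_def]; rw [if_neg (by omega), if_neg (by omega)]; ring
      rw [hc0, add_zero]
      have hsp := hvsucc (i+1)
      calc f (v (i+1)) * h = f (v (i+1)) * (v (i+2) - v (i+1)) := by rw [hsp]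
        _ ≤ _ := hb
    · -- the interval [v k, vmax]
      have e1 : u (i+1) = v k := by rw [hik]; exact hu1 _ le_rfl
      have e2 : u (i+2) = vmax := by
        have h2 : i+2 = k+1 := by omega
        rw [h2, huk1]
      have hint' := hintu i hi
      rw [e1, e2] at hint' ⊢
      have hfk : f (v k) ≤ f vmax := hmono ⟨hva _, hk1⟩ ⟨hmax.1, le_rfl⟩ hk1
      have hb := hconst (v k) vmax (f (v k)) hk1 hint'
        (fun x hx => hmono ⟨hva _, hk1⟩ ⟨le_trans (hva _) hx.1, hx.2⟩ hx.1)
      have hck : c i = (v (k+1) - vmax) * f vmax := by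
        simp only [hc_def]; rw [if_pos hik, if_neg (by omega)]; ring
      rw [hck, hik]
      have hsp := hvsucc k
      have hx : f (v k) * (v (k+1) - vmax) ≤ f vmax * (v (k+1) - vmax) :=
        mul_le_mul_of_nonneg_right hfk (by linarith)
      have hexp : f (v k) * h = f (v k) * (vmax - v k) + f (v k) * (v (k+1) - vmax) := by
        rw [← hsp]; ring
      linarith
    · rcases eq_or_lt_of_le (Nat.succ_le_of_lt hik) with hik2 | hik2
      · -- i = k : the interval [vmax, v (k+1)]
        have hik3 : i = k := by omega
        have e1 : u (i+1) = vmax := by rw [hik3, huk1]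
        have e2 : u (i+2) = v (k+1) := by
          have h2 : i + 2 = k + 2 := by omega
          rw [h2, hu2 _ le_rfl]
          norm_num
        have hint' := hintu i hi
        rw [e1, e2] at hint' ⊢
        have hk1b : v (k+1) ≤ vb := hvb _ (by omega)
        have hfk : f (v (k+1)) ≤ f vmax := hanti ⟨le_rfl, hmax.2⟩ ⟨hk2, hk1b⟩ hk2
        have hb := hconst vmax (v (k+1)) (f (v (k+1))) hk2 hint'
          (fun x hx => hanti ⟨hx.1, le_trans hx.2 hk1b⟩ ⟨hk2, hk1b⟩ hx.2)
        have hck : c i = (vmax - v k) * f vmax := by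
          simp only [hc_def]; rw [if_neg (by omega), if_pos hik3]; ring
        rw [hck, hik3]
        have hsp := hvsucc k
        have hx : f (v (k+1)) * (vmax - v k) ≤ f vmax * (vmax - v k) :=
          mul_le_mul_of_nonneg_right hfk (by linarith)
        have hexp : f (v (k+1)) * h
            = f (v (k+1)) * (v (k+1) - vmax) + f (v (k+1)) * (vmax - v k) := by
          rw [← hsp]; ring
        linarith
      · -- interval entirely right of vmax
        have e1 : u (i+1) = v i := by
          rw [hu2 _ (by omega)]; norm_num
        have e2 : u (i+2) = v (i+1) := by
          rw [hu2 _ (by omega)]; norm_num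
        have hint' := hintu i hi
        rw [e1, e2] at hint' ⊢
        have hge : vmax ≤ v i := le_trans hk2 (hvmono (by omega))
        have hib : v (i+1) ≤ vb := hvb _ (by omega)
        have hb := hconst (v i) (v (i+1)) (f (v (i+1))) (hvmono (by omega)) hint'
          (fun x hx => hanti ⟨le_trans hge hx.1, le_trans hx.2 hib⟩
            ⟨le_trans hge (hvmono (by omega)), hib⟩ hx.2)
        have hc0 : c i = 0 := by
          simp only [hc_def]; rw [if_neg (by omega), if_neg (by omega)]; ring
        rw [hc0, add_zero]
        have hsp := hvsucc i
        calc f (v (i+1)) * h = f (v (i+1)) * (v (i+1) - v i) := by rw [hsp]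
          _ ≤ _ := hb
  have htel : ∑ i ∈ Finset.range q, (∫ x in u (i+1)..u (i+2), f x)
      = ∫ x in (u 1)..(u (q+1)), f x := by
    have := intervalIntegral.sum_integral_adjacent_intervals (f := f) (μ := volume)
      (a := fun i => u (i+1)) (n := q) (fun i hi => hintu i hi)
    simpa using this
  have hfm : 0 ≤ f vmax := hf0 _ hmax
  have hcsum : ∑ i ∈ Finset.range q, c i ≤ h * f vmax := by
    have hs2 : ∑ i ∈ Finset.range q, (if i = k then (vmax - v k) * f vmax else 0)
        = (vmax - v k) * f vmax := by
      rw [Finset.sum_ite_eq' (Finset.range q) k fun _ => (vmax - v k) * f vmax,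
        if_pos (Finset.mem_range.mpr hkq)]
    have hsp := hvsucc k
    simp only [hc_def, Finset.sum_add_distrib, hs2]
    rcases Nat.eq_zero_or_pos k with h0 | hpos
    · subst h0
      have hz : ∑ i ∈ Finset.range q, (if i + 1 = 0 then (v (0+1) - vmax) * f vmax else 0)
          = 0 := Finset.sum_eq_zero fun i _ => if_neg (by omega)
      rw [hz, zero_add]
      have hle : vmax - v 0 ≤ h := by linarith
      nlinarith
    · obtain ⟨k', rfl⟩ : ∃ k', k = k' + 1 := ⟨k - 1, by omega⟩
      have hz : ∑ i ∈ Finset.range q, (if i + 1 = k' + 1 then (v (k'+1+1) - vmax) * f vmax else 0)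
          = (v (k'+1+1) - vmax) * f vmax := by
        simp only [add_left_inj]
        rw [Finset.sum_ite_eq' (Finset.range q) k' fun _ => (v (k'+1+1) - vmax) * f vmax,
          if_pos (Finset.mem_range.mpr (by omega))]
      rw [hz]
      nlinarith
  have hS : ∑ j ∈ Finset.Icc 1 q, f (va + (j:ℝ) * (vb - va) / q)
      = ∑ i ∈ Finset.range q, f (v (i+1)) := by
    rw [← Finset.Ico_add_one_right_eq_Icc, Finset.sum_Ico_eq_sum_range]
    refine Finset.sum_congr (by norm_num) fun i _ => ?_
    congr 1
    simp only [hv_def, hh_def]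
    push_cast
    ring
  have hmain : (∑ i ∈ Finset.range q, f (v (i+1))) * h
      ≤ (∫ x in va..vb, f x) + h * f vmax := by
    rw [Finset.sum_mul]
    calc ∑ i ∈ Finset.range q, f (v (i+1)) * h
        ≤ ∑ i ∈ Finset.range q, ((∫ x in u (i+1)..u (i+2), f x) + c i) :=
          Finset.sum_le_sum key
      _ = (∫ x in (u 1)..(u (q+1)), f x) + ∑ i ∈ Finset.range q, c i := by
          rw [Finset.sum_add_distrib, htel]
      _ ≤ (∫ x in va..vb, f x) + h * f vmax := by
          refine add_le_add ?_ hcsum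
          have h1 : IntervalIntegrable f volume va (u 1) :=
            hsubint _ _ le_rfl hab.le (huva _) (huvb _ (by omega))
          have h2 : IntervalIntegrable f volume (u 1) vb :=
            hsubint _ _ (huva _) (huvb _ (by omega)) hab.le le_rfl
          have hnn : 0 ≤ ∫ x in va..u 1, f x := by
            apply intervalIntegral.integral_nonneg (huva 1)
            intro x hx; exact hf0 x ⟨hx.1, le_trans hx.2 (huvb 1 (by omega))⟩
          rw [huq1]
          have hadd := intervalIntegral.integral_add_adjacent_intervals h1 h2
          linarith
  rw [hS]
  have hne : vb - va ≠ 0 := by linarith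
  have hI : ∫ x in va..vb, (f x + f vmax) = (∫ x in va..vb, f x) + (vb - va) * f vmax := by
    rw [intervalIntegral.integral_add hint intervalIntegrable_const,
      intervalIntegral.integral_const, smul_eq_mul]
  rw [hI]
  have hq1 : (1:ℝ) ≤ q := by exact_mod_cast hq
  have hSle : (∑ i ∈ Finset.range q, f (v (i+1)))
      ≤ (q:ℝ)/(vb-va) * (∫ x in va..vb, f x) + f vmax := by
    have heq : (q : ℝ) / (vb - va) * (∫ x in va..vb, f x) + f vmax
        = ((∫ x in va..vb, f x) + h * f vmax) / h := by
      rw [hh_def]; field_simp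
    rw [heq]
    exact (le_div_iff₀ hh).mpr hmain
  have hsplit : (q:ℝ)/(vb-va) * ((∫ x in va..vb, f x) + (vb-va) * f vmax)
      = (q:ℝ)/(vb-va) * (∫ x in va..vb, f x) + q * f vmax := by
    field_simp
  rw [hsplit]
  nlinarith [hSle, mul_nonneg (show (0:ℝ) ≤ (q:ℝ) - 1 by linarith) hfm]
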